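/- Let G be an m×n matrix over F_q such that every nonzero x ∈ F_q^m satisfies wt(x·G) ≥ d, where d ≥ 1, and set W = G^T. Let u be uniformly distributed on F_q^n and let c = u·W ∈ F_q^m. Then for every set B ⊆ {1,…,n} with |B| ≤ d − 1, the random vector (u_i)_{i∈B} is independent of c; equivalently, H((u_i)_{i∈B} | c) = H((u_i)_{i∈B}), so the coding scheme with matrix W is t-threshold secure with t = d − 1. -/

import Mathlib

open Matrix

section helpers

open Finset

variable {α β γ : Type*} [AddCommGroup α] [AddCommGroup β] [AddCommGroup γ]
variable [Fintype α] [DecidableEq β] [DecidableEq γ]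

lemma fiber_card_eq (f : α →+ β) {c : β} (u0 : α) (h : f u0 = c) :
    (univ.filter fun u => f u = c).card = (univ.filter fun u => f u = 0).card := by
  apply Finset.card_nbij' (fun u => u - u0) (fun w => w + u0)
  · intro u hu
    simp only [mem_coe, mem_filter, mem_univ, true_and] at hu ⊢
    simp [map_sub, hu, h]
  · intro w hw
    simp only [mem_coe, mem_filter, mem_univ, true_and] at hw ⊢
    simp [map_add, hw, h]
  · intro u _; simp
  · intro w _; simp

lemma card_eq_mul' [Fintype β] (f : α →+ β) (hf : Function.Surjective f) :
    Fintype.card α = Fintype.card β * (univ.filter fun u => f u = 0).card := by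
  have h := Finset.card_eq_sum_card_fiberwise
    (s := (univ : Finset α)) (t := (univ : Finset β)) (f := fun u => f u)
    (fun x _ => mem_univ _)
  rw [card_univ] at h
  rw [h]
  rw [Finset.sum_congr rfl (fun b _ =>
    fiber_card_eq f (hf b).choose (hf b).choose_spec)]
  rw [Finset.sum_const, card_univ, smul_eq_mul]

lemma key_count [Fintype β] (f : α →+ β) (g : α →+ γ)
    (hfg : ∀ b : β, ∃ u, g u = 0 ∧ f u = b) (b : β) (c : γ) :
    (univ.filter fun u => f u = b ∧ g u = c).card * Fintype.card α
      = (univ.filter fun u => f u = b).card * (univ.filter fun u => g u = c).card := by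
  -- the pair fiber count
  have hpair : ∀ (p : β × γ) (u1 : α), f u1 = p.1 → g u1 = p.2 →
      (univ.filter fun u => f u = p.1 ∧ g u = p.2).card
        = (univ.filter fun u => f u = 0 ∧ g u = 0).card := by
    intro p u1 h1 h2
    have h := fiber_card_eq (f.prod g) (c := p) u1 (by
      simp [AddMonoidHom.prod_apply, Prod.ext_iff, h1, h2])
    have e1 : (univ.filter fun u => (f.prod g) u = p)
        = (univ.filter fun u => f u = p.1 ∧ g u = p.2) := by
      ext u; simp [AddMonoidHom.prod_apply, Prod.ext_iff]
    have e2 : (univ.filter fun u => (f.prod g) u = 0)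
        = (univ.filter fun u => f u = 0 ∧ g u = 0) := by
      ext u; simp [AddMonoidHom.prod_apply, Prod.ext_iff]
    rw [e1, e2] at h
    exact h
  by_cases hc : ∃ u0, g u0 = c
  · obtain ⟨u0, hu0⟩ := hc
    obtain ⟨w, hw0, hwf⟩ := hfg (b - f u0)
    have hu1f : f (u0 + w) = b := by rw [map_add, hwf]; abel
    have hu1g : g (u0 + w) = c := by rw [map_add, hw0, hu0, add_zero]
    have hsurj : Function.Surjective f := fun b' => by
      obtain ⟨u, _, hu⟩ := hfg b'; exact ⟨u, hu⟩
    have h1 := hpair (b, c) (u0 + w) hu1f hu1g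
    obtain ⟨ub, _, hub⟩ := hfg b
    have h2 := fiber_card_eq f ub hub
    have h3 := fiber_card_eq g u0 hu0
    have h4 := card_eq_mul' f hsurj
    -- count kernel of g fiberwise along f
    have h5 : (univ.filter fun u => g u = 0).card
        = Fintype.card β * (univ.filter fun u => f u = 0 ∧ g u = 0).card := by
      have h := Finset.card_eq_sum_card_fiberwise
        (s := univ.filter fun u => g u = 0) (t := (univ : Finset β))
        (f := fun u => f u) (fun x _ => mem_univ _)
      rw [h]
      have : ∀ b' ∈ (univ : Finset β),
          ((univ.filter fun u => g u = 0).filter fun u => f u = b').card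
            = (univ.filter fun u => f u = 0 ∧ g u = 0).card := by
        intro b' _
        obtain ⟨u', hg', hf'⟩ := hfg b'
        have e : ((univ.filter fun u => g u = 0).filter fun u => f u = b')
            = (univ.filter fun u => f u = b' ∧ g u = 0) := by
          ext u; simp [and_comm]
        rw [e, hpair (b', 0) u' hf' hg']
      rw [Finset.sum_congr rfl this, Finset.sum_const, card_univ, smul_eq_mul]
    rw [h1, h2, h3, h4, h5]
    ring
  · have e1 : (univ.filter fun u => f u = b ∧ g u = c) = ∅ := by
      rw [Finset.filter_eq_empty_iff]
      intro u _ h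
      exact hc ⟨u, h.2⟩
    have e2 : (univ.filter fun u => g u = c) = ∅ := by
      rw [Finset.filter_eq_empty_iff]
      intro u _ h
      exact hc ⟨u, h⟩
    rw [e1, e2]
    simp

end helpers

/-- Threshold security from minimum distance.  Let `G` be an `m × n` matrix over
`F` with `wt(x·G) ≥ d` for every nonzero `x` (`d ≥ 1`), and set `W = Gᵀ`.  For `u` uniform on
`F^n` and `c = u·W`, for every set `B` of coordinates with `|B| ≤ d - 1`, the vector
`(uᵢ)_{i ∈ B}` is independent of `c` (so `H((uᵢ)_{i∈B} | c) = H((uᵢ)_{i∈B})`): the joint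
counts factor into the product of the marginal counts. -/
theorem stmt_4 {F : Type} [Field F] [Fintype F] [DecidableEq F]
    (m n d : ℕ) (hd : 1 ≤ d)
    (G : Matrix (Fin m) (Fin n) F)
    (hmin : ∀ x : Fin m → F, x ≠ 0 →
      d ≤ (Finset.univ.filter (fun j : Fin n => Matrix.vecMul x G j ≠ 0)).card) :
    ∀ B : Finset (Fin n), B.card ≤ d - 1 →
      ∀ (a : {i // i ∈ B} → F) (c : Fin m → F),
        (Finset.univ.filter (fun u : Fin n → F =>
            (fun i : {i // i ∈ B} => u i.1) = a ∧ Matrix.vecMul u Gᵀ = c)).card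
          * Fintype.card (Fin n → F)
        = (Finset.univ.filter (fun u : Fin n → F =>
            (fun i : {i // i ∈ B} => u i.1) = a)).card
          * (Finset.univ.filter (fun u : Fin n → F => Matrix.vecMul u Gᵀ = c)).card := by
  classical
  intro B hB a c
  set R : (Fin n → F) →ₗ[F] ({i // i ∈ B} → F) :=
    LinearMap.funLeft F F (fun i : {i // i ∈ B} => (i : Fin n)) with hRdef
  set L : (Fin n → F) →ₗ[F] (Fin m → F) := Matrix.mulVecLin G with hLdef
  have hRsurj : Function.Surjective R :=
    LinearMap.funLeft_surjective_of_injective F F _ Subtype.val_injective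
  -- key: restriction map is surjective on the kernel of L
  have htop : Submodule.map R (LinearMap.ker L) = ⊤ := by
    by_contra hne
    obtain ⟨φ, hφne, hφ⟩ := Submodule.exists_dual_map_eq_bot_of_lt_top
      (p := Submodule.map R (LinearMap.ker L)) (lt_top_iff_ne_top.mpr hne) inferInstance
    set f : (Fin n → F) →ₗ[F] F := φ ∘ₗ R with hfdef
    have hker : ∀ u, L u = 0 → f u = 0 := by
      intro u hu
      have hmem : φ (R u) ∈ Submodule.map φ (Submodule.map R (LinearMap.ker L)) :=
        Submodule.mem_map_of_mem (Submodule.mem_map_of_mem (by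
          simpa [LinearMap.mem_ker] using hu))
      rw [hφ] at hmem
      exact (Submodule.mem_bot F).mp hmem
    have hle : LinearMap.ker L ≤ LinearMap.ker f := by
      intro u hu
      simp only [LinearMap.mem_ker] at hu ⊢
      exact hker u hu
    set fbar : ((Fin n → F) ⧸ LinearMap.ker L) →ₗ[F] F :=
      Submodule.liftQ (LinearMap.ker L) f hle with hfbar
    obtain ⟨g, hg⟩ := LinearMap.exists_extend
      (fbar ∘ₗ (L.quotKerEquivRange.symm : LinearMap.range L →ₗ[F] _))
    have hgL : ∀ u, g (L u) = f u := by
      intro u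
      have h1 : (⟨L u, LinearMap.mem_range_self L u⟩ : LinearMap.range L)
          = L.quotKerEquivRange (Submodule.Quotient.mk u) :=
        Subtype.ext (LinearMap.quotKerEquivRange_apply_mk L u).symm
      calc g (L u) = (g ∘ₗ (LinearMap.range L).subtype)
            ⟨L u, LinearMap.mem_range_self L u⟩ := rfl
        _ = fbar (L.quotKerEquivRange.symm ⟨L u, LinearMap.mem_range_self L u⟩) := by
            rw [hg]; rfl
        _ = fbar (Submodule.Quotient.mk u) := by rw [h1, LinearEquiv.symm_apply_apply]
        _ = f u := Submodule.liftQ_apply _ _ _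
    set x : Fin m → F := fun j => g fun k => if j = k then 1 else 0 with hxdef
    set v : Fin n → F := fun i => f fun k => if i = k then 1 else 0 with hvdef
    have hfv : ∀ u, f u = u ⬝ᵥ v := by
      intro u
      rw [LinearMap.pi_apply_eq_sum_univ f u]
      simp [dotProduct, hvdef, smul_eq_mul]
    have hgx : ∀ y : Fin m → F, g y = y ⬝ᵥ x := by
      intro y
      rw [LinearMap.pi_apply_eq_sum_univ g y]
      simp [dotProduct, hxdef, smul_eq_mul]
    have hvx : v = x ᵥ* G := by
      ext i
      have h1 : v i = f fun k => if i = k then 1 else 0 := rfl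
      rw [h1, ← hgL, hgx, hLdef, Matrix.mulVecLin_apply, dotProduct_comm,
        Matrix.dotProduct_mulVec]
      simp [dotProduct]
    have hsupp : ∀ j, j ∉ B → v j = 0 := by
      intro j hj
      have hR0 : R (fun k => if j = k then 1 else 0) = 0 := by
        ext i
        simp only [hRdef, LinearMap.funLeft_apply, Function.comp, Pi.zero_apply]
        rw [if_neg]
        intro h
        exact hj (h ▸ i.2)
      have : v j = φ (R fun k => if j = k then 1 else 0) := rfl
      rw [this, hR0, map_zero]
    have hx : x ≠ 0 := by
      intro h0
      have hv0 : v = 0 := by rw [hvx, h0, Matrix.zero_vecMul]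
      apply hφne
      apply LinearMap.ext
      intro y
      obtain ⟨u, hu⟩ := hRsurj y
      have : φ y = f u := by rw [← hu]; rfl
      rw [this, hfv, hv0]
      simp
    have hdle := hmin x hx
    have hsub : (Finset.univ.filter fun j => Matrix.vecMul x G j ≠ 0) ⊆ B := by
      intro j hj
      simp only [Finset.mem_filter, Finset.mem_univ, true_and] at hj
      by_contra hjB
      have h0 := hsupp j hjB
      rw [hvx] at h0
      exact hj h0
    have : d ≤ B.card := hdle.trans (Finset.card_le_card hsub)
    omega
  have hfg : ∀ b : {i // i ∈ B} → F, ∃ u, L u = 0 ∧ R u = b := by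
    intro b
    have : b ∈ Submodule.map R (LinearMap.ker L) := htop ▸ Submodule.mem_top
    obtain ⟨u, hu, hub⟩ := this
    exact ⟨u, by simpa [LinearMap.mem_ker] using hu, hub⟩
  have key := key_count (R.toAddMonoidHom) (L.toAddMonoidHom)
    (fun b => by obtain ⟨u, h1, h2⟩ := hfg b; exact ⟨u, h1, h2⟩) a c
  have e1 : (Finset.univ.filter (fun u : Fin n → F =>
        (fun i : {i // i ∈ B} => u i.1) = a ∧ Matrix.vecMul u Gᵀ = c))
      = (Finset.univ.filter fun u => R.toAddMonoidHom u = a ∧ L.toAddMonoidHom u = c) := by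
    ext u
    simp only [Finset.mem_filter, Finset.mem_univ, true_and, Matrix.vecMul_transpose]
    exact Iff.rfl
  have e2 : (Finset.univ.filter (fun u : Fin n → F =>
        (fun i : {i // i ∈ B} => u i.1) = a))
      = (Finset.univ.filter fun u => R.toAddMonoidHom u = a) := by
    ext u
    simp only [Finset.mem_filter, Finset.mem_univ, true_and]
    exact Iff.rfl
  have e3 : (Finset.univ.filter (fun u : Fin n → F => Matrix.vecMul u Gᵀ = c))
      = (Finset.univ.filter fun u => L.toAddMonoidHom u = c) := by
    ext u
    simp only [Finset.mem_filter, Finset.mem_univ, true_and, Matrix.vecMul_transpose]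
    exact Iff.rfl
  rw [e1, e2, e3]
  exact key
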